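/- For m = 2k−1 odd, the center of E_{2k−1}^ν is isomorphic to ℤ/2 × ℤ/2 if ν = 1 or k is even, and isomorphic to ℤ/4 if ν = −1 and k is odd. -/

import Mathlib

/-- Relators for the group `E_m^ν`: generators are `none` (the central element `-1`)
and `some i` (the generator `xᵢ`, 0-indexed); relations are `(-1)² = 1`, `-1` central,
`xᵢ² = ν`, far commutation `xᵢxⱼ = xⱼxᵢ` for `|i-j| ≥ 2`, and adjacent
anticommutation `x_{i+1}xᵢ = (-1)·xᵢx_{i+1}`. -/
def Erel (m : ℕ) (ν : ℤˣ) : Set (FreeGroup (Option (Fin m))) :=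
  {FreeGroup.of none ^ 2} ∪
    {r | ∃ i : Fin m, r = FreeGroup.of none * FreeGroup.of (some i) *
        (FreeGroup.of none)⁻¹ * (FreeGroup.of (some i))⁻¹} ∪
    {r | ∃ i : Fin m, r = FreeGroup.of (some i) ^ 2 *
        (if ν = 1 then 1 else FreeGroup.of none)⁻¹} ∪
    {r | ∃ i j : Fin m, (i : ℕ) + 2 ≤ (j : ℕ) ∧ r = FreeGroup.of (some i) *
        FreeGroup.of (some j) * (FreeGroup.of (some i))⁻¹ * (FreeGroup.of (some j))⁻¹} ∪
    {r | ∃ i j : Fin m, (j : ℕ) = (i : ℕ) + 1 ∧ r = FreeGroup.of (some j) *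
        FreeGroup.of (some i) *
        (FreeGroup.of none * FreeGroup.of (some i) * FreeGroup.of (some j))⁻¹}

/-- The group `E_m^ν`. -/
abbrev Egrp (m : ℕ) (ν : ℤˣ) := PresentedGroup (Erel m ν)

/-- The central element `-1` of `E_m^ν`. -/
def neg1 (m : ℕ) (ν : ℤˣ) : Egrp m ν := PresentedGroup.of none

/-- The generator `x_{i+1}` of `E_m^ν` (0-indexed: `xgen m ν i` is the paper's `x_{i+1}`). -/
def xgen (m : ℕ) (ν : ℤˣ) (i : Fin m) : Egrp m ν := PresentedGroup.of (some i)


namespace S15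

lemma upow_add (u : ℤˣ) (a b : ZMod 2) : u ^ (a+b).val = u ^ a.val * u ^ b.val := by
  have h2 : u * u = 1 := Int.units_mul_self u
  rcases (by decide : ∀ z : ZMod 2, z = 0 ∨ z = 1) a with ha | ha <;>
    rcases (by decide : ∀ z : ZMod 2, z = 0 ∨ z = 1) b with hb | hb <;>
      subst ha <;> subst hb <;>
      simp [show ((0:ZMod 2)).val = 0 from rfl, show ((1:ZMod 2)).val = 1 from rfl,
        show ((1:ZMod 2)+1).val = 0 by decide, h2]

variable (m : ℕ) (ν : ℤˣ)

/-- padded vector -/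
def pad (a : Fin m → ZMod 2) : ℕ → ZMod 2 := fun n => if h : n < m then a ⟨n, h⟩ else 0

variable {m}

lemma pad_add (a b : Fin m → ZMod 2) (n : ℕ) :
    pad m (a + b) n = pad m a n + pad m b n := by
  unfold pad; split <;> simp

lemma pad_zero (n : ℕ) : pad m (0 : Fin m → ZMod 2) n = 0 := by
  unfold pad; split <;> simp

lemma pad_single (j : Fin m) (v : ZMod 2) (n : ℕ) :
    pad m (fun x => if x = j then v else 0) n = if n = (j : ℕ) then v else 0 := by
  unfold pad
  split
  · exact if_congr (by rw [Fin.ext_iff]) rfl rfl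
  · rw [if_neg]; omega

lemma pad_smul (t : ZMod 2) (a : Fin m → ZMod 2) (n : ℕ) :
    pad m (fun x => t * a x) n = t * pad m a n := by
  unfold pad; split <;> simp

lemma pad_big (a : Fin m → ZMod 2) (n : ℕ) (h : m ≤ n) : pad m a n = 0 := by
  unfold pad; rw [dif_neg]; omega

variable (m)

/-- the "anticommutation count" bilinear form -/
def Bf (a b : Fin m → ZMod 2) : ZMod 2 :=
  ∑ i ∈ Finset.range m, pad m a (i+1) * pad m b i

/-- the "squares count" bilinear form -/
def Qf (a b : Fin m → ZMod 2) : ZMod 2 :=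
  ∑ i ∈ Finset.range m, pad m a i * pad m b i

/-- the cocycle -/
def cf (a b : Fin m → ZMod 2) : ℤˣ :=
  (-1) ^ (Bf m a b).val * ν ^ (Qf m a b).val

variable {m}

lemma Bf_add_left (a b d : Fin m → ZMod 2) : Bf m (a+b) d = Bf m a d + Bf m b d := by
  unfold Bf; rw [← Finset.sum_add_distrib]
  exact Finset.sum_congr rfl fun i _ => by rw [pad_add, add_mul]

lemma Bf_add_right (a b d : Fin m → ZMod 2) : Bf m a (b+d) = Bf m a b + Bf m a d := by
  unfold Bf; rw [← Finset.sum_add_distrib]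
  exact Finset.sum_congr rfl fun i _ => by rw [pad_add, mul_add]

lemma Qf_add_left (a b d : Fin m → ZMod 2) : Qf m (a+b) d = Qf m a d + Qf m b d := by
  unfold Qf; rw [← Finset.sum_add_distrib]
  exact Finset.sum_congr rfl fun i _ => by rw [pad_add, add_mul]

lemma Qf_add_right (a b d : Fin m → ZMod 2) : Qf m a (b+d) = Qf m a b + Qf m a d := by
  unfold Qf; rw [← Finset.sum_add_distrib]
  exact Finset.sum_congr rfl fun i _ => by rw [pad_add, mul_add]

lemma Bf_zero_left (d : Fin m → ZMod 2) : Bf m 0 d = 0 := by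
  unfold Bf; exact Finset.sum_eq_zero fun i _ => by rw [pad_zero, zero_mul]

lemma Bf_zero_right (d : Fin m → ZMod 2) : Bf m d 0 = 0 := by
  unfold Bf; exact Finset.sum_eq_zero fun i _ => by rw [pad_zero, mul_zero]

lemma Qf_zero_left (d : Fin m → ZMod 2) : Qf m 0 d = 0 := by
  unfold Qf; exact Finset.sum_eq_zero fun i _ => by rw [pad_zero, zero_mul]

lemma Qf_zero_right (d : Fin m → ZMod 2) : Qf m d 0 = 0 := by
  unfold Qf; exact Finset.sum_eq_zero fun i _ => by rw [pad_zero, mul_zero]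

lemma Qf_comm (a b : Fin m → ZMod 2) : Qf m a b = Qf m b a :=
  Finset.sum_congr rfl fun i _ => mul_comm _ _

variable (m)

lemma cf_add_left (a b d : Fin m → ZMod 2) :
    cf m ν (a+b) d = cf m ν a d * cf m ν b d := by
  unfold cf; rw [Bf_add_left, Qf_add_left, upow_add, upow_add, mul_mul_mul_comm]

lemma cf_add_right (a b d : Fin m → ZMod 2) :
    cf m ν a (b+d) = cf m ν a b * cf m ν a d := by
  unfold cf; rw [Bf_add_right, Qf_add_right, upow_add, upow_add, mul_mul_mul_comm]

lemma cf_zero_left (d : Fin m → ZMod 2) : cf m ν 0 d = 1 := by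
  unfold cf; rw [Bf_zero_left, Qf_zero_left]; simp

lemma cf_zero_right (d : Fin m → ZMod 2) : cf m ν d 0 = 1 := by
  unfold cf; rw [Bf_zero_right, Qf_zero_right]; simp

/-- Concrete model of `E_m^ν`. -/
@[ext]
structure Model (m : ℕ) (ν : ℤˣ) where
  s : ℤˣ
  a : Fin m → ZMod 2

variable {m}

instance : Group (Model m ν) where
  mul p q := ⟨p.s * q.s * cf m ν p.a q.a, p.a + q.a⟩
  one := ⟨1, 0⟩
  inv p := ⟨p.s * cf m ν p.a p.a, p.a⟩
  mul_assoc p q r := by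
    refine Model.ext ?_ ?_
    · show p.s * q.s * cf m ν p.a q.a * r.s * cf m ν (p.a + q.a) r.a
        = p.s * (q.s * r.s * cf m ν q.a r.a) * cf m ν p.a (q.a + r.a)
      rw [cf_add_left, cf_add_right]
      simp only [mul_assoc, mul_comm, mul_left_comm]
    · show p.a + q.a + r.a = p.a + (q.a + r.a); rw [add_assoc]
  one_mul p := by
    refine Model.ext ?_ ?_
    · show 1 * p.s * cf m ν 0 p.a = p.s; rw [cf_zero_left]; simp
    · show 0 + p.a = p.a; simp
  mul_one p := by
    refine Model.ext ?_ ?_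
    · show p.s * 1 * cf m ν p.a 0 = p.s; rw [cf_zero_right]; simp
    · show p.a + 0 = p.a; simp
  inv_mul_cancel p := by
    refine Model.ext ?_ ?_
    · show p.s * cf m ν p.a p.a * p.s * cf m ν p.a p.a = 1
      calc p.s * cf m ν p.a p.a * p.s * cf m ν p.a p.a
          = (p.s * cf m ν p.a p.a) * (p.s * cf m ν p.a p.a) := by rw [mul_assoc]
        _ = 1 := Int.units_mul_self _
    · show p.a + p.a = 0
      funext x
      show p.a x + p.a x = 0
      exact CharTwo.add_self_eq_zero _

lemma Model.mul_def (p q : Model m ν) :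
    p * q = ⟨p.s * q.s * cf m ν p.a q.a, p.a + q.a⟩ := rfl

lemma Model.one_def : (1 : Model m ν) = ⟨1, 0⟩ := rfl


variable {m : ℕ} {ν : ℤˣ}

lemma rel_eq_one {r : FreeGroup (Option (Fin m))} (h : r ∈ Erel m ν) :
    PresentedGroup.mk (Erel m ν) r = 1 :=
  (QuotientGroup.eq_one_iff _).mpr (Subgroup.subset_normalClosure h)

lemma relN : (neg1 m ν) * (neg1 m ν) = 1 := by
  have hmem : FreeGroup.of (none : Option (Fin m)) ^ 2 ∈ Erel m ν := by
    unfold Erel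
    simp only [Set.mem_union, Set.mem_singleton_iff, Set.mem_setOf_eq]
    exact Or.inl (Or.inl (Or.inl (Or.inl trivial)))
  have h := rel_eq_one (ν := ν) hmem
  rw [map_pow, sq] at h
  exact h

lemma relC (i : Fin m) : neg1 m ν * xgen m ν i = xgen m ν i * neg1 m ν := by
  have hmem : FreeGroup.of (none : Option (Fin m)) * FreeGroup.of (some i) *
      (FreeGroup.of none)⁻¹ * (FreeGroup.of (some i))⁻¹ ∈ Erel m ν := by
    unfold Erel
    simp only [Set.mem_union, Set.mem_singleton_iff, Set.mem_setOf_eq]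
    exact Or.inl (Or.inl (Or.inl (Or.inr ⟨i, rfl⟩)))
  have h := rel_eq_one (ν := ν) hmem
  simp only [map_mul, map_inv] at h
  exact commutatorElement_eq_one_iff_mul_comm.mp h

/-- `χ : ℤˣ → E`. -/
def chi (m : ℕ) (ν : ℤˣ) (s : ℤˣ) : Egrp m ν := if s = 1 then 1 else neg1 m ν

lemma chi_one : chi m ν 1 = 1 := if_pos rfl
lemma chi_neg : chi m ν (-1) = neg1 m ν := if_neg (by decide)

lemma relSq (i : Fin m) : xgen m ν i * xgen m ν i = chi m ν ν := by
  have hmem : FreeGroup.of (some i) ^ 2 *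
      (if ν = 1 then 1 else FreeGroup.of (none : Option (Fin m)))⁻¹ ∈ Erel m ν := by
    unfold Erel
    simp only [Set.mem_union, Set.mem_singleton_iff, Set.mem_setOf_eq]
    exact Or.inl (Or.inl (Or.inr ⟨i, rfl⟩))
  have h := rel_eq_one (ν := ν) hmem
  simp only [map_mul, map_inv, map_pow] at h
  rw [mul_inv_eq_one] at h
  rw [sq] at h
  refine h.trans ?_
  rw [chi, apply_ite (PresentedGroup.mk (Erel m ν)), map_one]
  rfl

lemma relFar {i j : Fin m} (hij : (i:ℕ) + 2 ≤ (j:ℕ)) :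
    xgen m ν i * xgen m ν j = xgen m ν j * xgen m ν i := by
  have hmem : FreeGroup.of (some i) * FreeGroup.of (some j) *
      (FreeGroup.of (some i))⁻¹ * (FreeGroup.of (some j))⁻¹ ∈ Erel m ν := by
    unfold Erel
    simp only [Set.mem_union, Set.mem_singleton_iff, Set.mem_setOf_eq]
    exact Or.inl (Or.inr ⟨i, j, hij, rfl⟩)
  have h := rel_eq_one (ν := ν) hmem
  simp only [map_mul, map_inv] at h
  exact commutatorElement_eq_one_iff_mul_comm.mp h

lemma relAdj {i j : Fin m} (hij : (j:ℕ) = (i:ℕ) + 1) :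
    xgen m ν j * xgen m ν i = neg1 m ν * xgen m ν i * xgen m ν j := by
  have hmem : FreeGroup.of (some j) * FreeGroup.of (some i) *
      (FreeGroup.of (none : Option (Fin m)) * FreeGroup.of (some i) *
        FreeGroup.of (some j))⁻¹ ∈ Erel m ν := by
    unfold Erel
    simp only [Set.mem_union, Set.mem_singleton_iff, Set.mem_setOf_eq]
    exact Or.inr ⟨i, j, hij, rfl⟩
  have h := rel_eq_one (ν := ν) hmem
  simp only [map_mul, map_inv] at h
  rw [mul_inv_eq_one] at h
  exact h

lemma Ncen (g : Egrp m ν) : g * neg1 m ν = neg1 m ν * g := by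
  have : g ∈ Subgroup.centralizer {neg1 m ν} := by
    refine PresentedGroup.generated_by _ _ (fun j => ?_) g
    rw [Subgroup.mem_centralizer_singleton_iff]
    cases j with
    | none => rfl
    | some i => exact (relC i).symm
  exact Subgroup.mem_centralizer_singleton_iff.mp this

lemma chi_mul (s t : ℤˣ) : chi m ν (s * t) = chi m ν s * chi m ν t := by
  rcases Int.units_eq_one_or s with hs | hs <;> rcases Int.units_eq_one_or t with ht | ht <;>
    subst hs <;> subst ht <;>
    simp [chi_one, chi_neg, relN, show ((-1 : ℤˣ)) * (-1) = 1 by decide]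

lemma chi_comm (s : ℤˣ) (g : Egrp m ν) : chi m ν s * g = g * chi m ν s := by
  rcases Int.units_eq_one_or s with hs | hs <;> subst hs
  · rw [chi_one, one_mul, mul_one]
  · rw [chi_neg]; exact (Ncen g).symm

lemma chi_inv (s : ℤˣ) : (chi m ν s)⁻¹ = chi m ν s := by
  rcases Int.units_eq_one_or s with hs | hs <;> subst hs
  · rw [chi_one, inv_one]
  · rw [chi_neg]; exact inv_eq_of_mul_eq_one_left relN

lemma xgen_inv (i : Fin m) : (xgen m ν i)⁻¹ = chi m ν ν * xgen m ν i := by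
  refine inv_eq_of_mul_eq_one_right ?_
  rw [← mul_assoc, ← chi_comm, mul_assoc, relSq, ← chi_mul, Int.units_mul_self, chi_one]


noncomputable section

/-- `X' t` is `x_t` for `t < m`, else `1`. -/
def X' (m : ℕ) (ν : ℤˣ) (t : ℕ) : Egrp m ν :=
  if h : t < m then xgen m ν ⟨t, h⟩ else 1

lemma far' {s t : ℕ} (h : s + 2 ≤ t) : X' m ν s * X' m ν t = X' m ν t * X' m ν s := by
  by_cases hs : s < m <;> by_cases ht : t < m <;> simp only [X', dif_pos, dif_neg, hs, ht,
    dite_true, dite_false, one_mul, mul_one, if_pos, if_neg, dite_eq_ite]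
  · exact relFar h
  all_goals simp [hs, ht]

lemma adj' {t : ℕ} (h : t + 1 < m) :
    X' m ν (t+1) * X' m ν t = neg1 m ν * X' m ν t * X' m ν (t+1) := by
  unfold X'
  rw [dif_pos h, dif_pos (by omega)]
  exact relAdj rfl

lemma sq' {t : ℕ} (h : t < m) : X' m ν t * X' m ν t = chi m ν ν := by
  unfold X'; rw [dif_pos h]; exact relSq _

/-- ordered word `∏_{t=s}^{s+n-1} x_t^{a t}` -/
noncomputable def W (m : ℕ) (ν : ℤˣ) (a : ℕ → ZMod 2) (s n : ℕ) : Egrp m ν :=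
  ((List.range' s n).map (fun t => X' m ν t ^ (a t).val)).prod

lemma W_zero (a : ℕ → ZMod 2) (s : ℕ) : W m ν a s 0 = 1 := rfl

lemma W_succ (a : ℕ → ZMod 2) (s n : ℕ) :
    W m ν a s (n+1) = X' m ν s ^ (a s).val * W m ν a (s+1) n := by
  unfold W
  rw [List.range'_succ, List.map_cons, List.prod_cons]

lemma W_append (a : ℕ → ZMod 2) (s p q : ℕ) :
    W m ν a s (p + q) = W m ν a s p * W m ν a (s + p) q := by
  induction p generalizing s with
  | zero => rw [Nat.zero_add, W_zero, one_mul, Nat.add_zero]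
  | succ p ih =>
      have h2 : p + 1 + q = (p + q) + 1 := by omega
      rw [h2, W_succ, W_succ, ih, mul_assoc, show s + (p+1) = (s+1) + p by omega]

lemma W_congr {a b : ℕ → ZMod 2} (s n : ℕ) (h : ∀ t, s ≤ t → t < s + n → a t = b t) :
    W m ν a s n = W m ν b s n := by
  induction n generalizing s with
  | zero => rw [W_zero, W_zero]
  | succ n ih =>
      rw [W_succ, W_succ, h s (le_refl s) (by omega),
        ih (s+1) (fun t h1 h2 => h t (by omega) (by omega))]

lemma W_zero_fn (s n : ℕ) : W m ν (fun _ => (0 : ZMod 2)) s n = 1 := by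
  induction n generalizing s with
  | zero => rw [W_zero]
  | succ n ih => rw [W_succ, ih]; simp [ZMod.val_zero]

lemma zmod2_cases (z : ZMod 2) : z = 0 ∨ z = 1 := by revert z; decide

lemma zmod2_val_cases (z : ZMod 2) : z.val = 0 ∨ z.val = 1 := by
  rcases zmod2_cases z with h | h <;> subst h <;> decide

lemma chi_pull (s : ℤˣ) (x y z : Egrp m ν) :
    x * (y * (z * chi m ν s)) = chi m ν s * (x * (y * z)) := by
  rw [← chi_comm s z, ← mul_assoc y, ← chi_comm s y, ← mul_assoc x, ← mul_assoc x,
    ← chi_comm s x]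
  simp only [mul_assoc]

lemma Wcomm (a : ℕ → ZMod 2) (j : ℕ) (n : ℕ) : ∀ s, j + 2 ≤ s →
    W m ν a s n * X' m ν j = X' m ν j * W m ν a s n := by
  induction n with
  | zero => intro s _; rw [W_zero, one_mul, mul_one]
  | succ n ih =>
      intro s hs
      rw [W_succ, mul_assoc, ih (s+1) (by omega), ← mul_assoc, ← mul_assoc]
      congr 1
      rcases zmod2_val_cases (a s) with h | h <;> rw [h]
      · simp
      · rw [pow_one]; exact (far' hs).symm

/-- Key lemma: absorbing a generator on the right of the ordered word. -/
lemma W_mulX (a : ℕ → ZMod 2) (j : ℕ) (hj : j < m) (ha : ∀ t, m ≤ t → a t = 0) :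
    W m ν a 0 m * X' m ν j
      = chi m ν ((-1) ^ (a (j+1)).val * ν ^ (a j).val)
        * W m ν (fun t => if t = j then a t + 1 else a t) 0 m := by
  set a' := fun t => if t = j then a t + 1 else a t with ha'
  obtain ⟨r, hr⟩ : ∃ r, m = j + 1 + r := ⟨m - j - 1, by omega⟩
  have dec : ∀ b : ℕ → ZMod 2, W m ν b 0 m
      = W m ν b 0 j * (X' m ν j ^ (b j).val * W m ν b (j+1) r) := by
    intro b
    calc W m ν b 0 m = W m ν b 0 (j + (1 + r)) := congrArg (W m ν b 0) (by omega)
      _ = W m ν b 0 j * W m ν b (0 + j) (1+r) := W_append b 0 j (1+r)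
      _ = W m ν b 0 j * (X' m ν j ^ (b j).val * W m ν b (j+1) r) := by
          rw [Nat.zero_add, show 1 + r = r + 1 by omega, W_succ]
  have tail : W m ν a (j+1) r * X' m ν j
      = X' m ν j * (W m ν a (j+1) r * chi m ν ((-1) ^ (a (j+1)).val)) := by
    cases r with
    | zero =>
        rw [W_zero, one_mul, ha (j+1) (by omega)]
        simp [chi_one]
    | succ r' =>
        have hj1 : j + 1 < m := by omega
        rw [W_succ, mul_assoc, Wcomm a j r' (j+2) (by omega), ← mul_assoc]
        rcases zmod2_val_cases (a (j+1)) with h | h <;> rw [h]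
        · simp [chi_one]
        · rw [pow_one, pow_one, adj' hj1, chi_neg]
          have hc := chi_comm (m := m) (ν := ν) (-1)
          rw [chi_neg] at hc
          calc neg1 m ν * X' m ν j * X' m ν (j+1) * W m ν a (j + 2) r'
              = neg1 m ν * (X' m ν j * (X' m ν (j+1) * W m ν a (j + 2) r')) := by
                simp only [mul_assoc]
            _ = X' m ν j * (X' m ν (j+1) * W m ν a (j + 2) r') * neg1 m ν := hc _
            _ = X' m ν j * (X' m ν (j+1) * W m ν a (j + 2) r' * neg1 m ν) := by
                simp only [mul_assoc]
  have merge : X' m ν j ^ (a j).val * X' m ν j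
      = X' m ν j ^ (a' j).val * chi m ν (ν ^ (a j).val) := by
    rcases zmod2_cases (a j) with hv | hv
    · have h1 : (a j).val = 0 := by rw [hv]; decide
      have h2 : (a' j).val = 1 := by simp only [ha', if_pos rfl, hv]; decide
      rw [h1, h2, pow_zero, pow_zero, pow_one, chi_one, one_mul, mul_one]
    · have h1 : (a j).val = 1 := by rw [hv]; decide
      have h2 : (a' j).val = 0 := by simp only [ha', if_pos rfl, hv]; decide
      rw [h1, h2, pow_zero, pow_one, pow_one, sq' hj, one_mul]
  have e1 : W m ν a 0 j = W m ν a' 0 j :=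
    W_congr 0 j (fun t _ h2 => by
      have hne : t ≠ j := by omega
      simp only [ha', if_neg hne])
  have e2 : W m ν a (j+1) r = W m ν a' (j+1) r :=
    W_congr (j+1) r (fun t h1 _ => by
      have hne : t ≠ j := by omega
      simp only [ha', if_neg hne])
  set P := ν ^ (a j).val
  set Q := (-1 : ℤˣ) ^ (a (j+1)).val
  calc W m ν a 0 m * X' m ν j
      = W m ν a 0 j * (X' m ν j ^ (a j).val * (W m ν a (j+1) r * X' m ν j)) := by
        rw [dec a]; simp only [mul_assoc]
    _ = W m ν a 0 j * ((X' m ν j ^ (a j).val * X' m ν j)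
          * (W m ν a (j+1) r * chi m ν Q)) := by
        rw [tail]; simp only [mul_assoc]
    _ = W m ν a 0 j * ((X' m ν j ^ (a' j).val * chi m ν P)
          * (W m ν a (j+1) r * chi m ν Q)) := by rw [merge]
    _ = W m ν a 0 j * (X' m ν j ^ (a' j).val
          * (W m ν a (j+1) r * (chi m ν Q * chi m ν P))) := by
        rw [mul_assoc (X' m ν j ^ (a' j).val), chi_comm P (W m ν a (j+1) r * chi m ν Q)]
        simp only [mul_assoc]
    _ = chi m ν (Q * P) * (W m ν a 0 j
          * (X' m ν j ^ (a' j).val * W m ν a (j+1) r)) := by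
        rw [← chi_mul, chi_pull]
    _ = chi m ν (Q * P) * W m ν a' 0 m := by rw [dec a', e1, e2]

section
variable {m : ℕ} {ν : ℤˣ}

lemma neg1_inv : (neg1 m ν)⁻¹ = neg1 m ν := inv_eq_of_mul_eq_one_left relN

def delta (j : Fin m) : Fin m → ZMod 2 := fun x => if x = j then 1 else 0

/-- normal form: `±1 ⋅ x_0^{a 0} ⋯ x_{m-1}^{a (m-1)}` -/
def psi (m : ℕ) (ν : ℤˣ) (p : ℤˣ × (Fin m → ZMod 2)) : Egrp m ν :=
  chi m ν p.1 * W m ν (pad m p.2) 0 m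

lemma pad_add_delta (a : Fin m → ZMod 2) (j : Fin m) :
    pad m (a + delta j) = fun t => if t = (j:ℕ) then pad m a t + 1 else pad m a t := by
  funext t
  rw [pad_add]
  show pad m a t + pad m (fun x => if x = j then 1 else 0) t = _
  rw [pad_single]
  split <;> simp

lemma xgen_eq_X' (j : Fin m) : xgen m ν j = X' m ν (j : ℕ) := by
  rw [X', dif_pos j.isLt]

lemma psi_mul_chi (p : ℤˣ × (Fin m → ZMod 2)) (u : ℤˣ) :
    psi m ν p * chi m ν u = psi m ν (p.1 * u, p.2) := by
  unfold psi
  rw [mul_assoc, ← chi_comm u, ← mul_assoc, ← chi_mul]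

lemma psi_mul_xgen (p : ℤˣ × (Fin m → ZMod 2)) (j : Fin m) :
    psi m ν p * xgen m ν j
      = psi m ν ((-1) ^ (pad m p.2 ((j:ℕ)+1)).val * ν ^ (pad m p.2 (j:ℕ)).val * p.1,
          p.2 + delta j) := by
  unfold psi
  rw [xgen_eq_X', mul_assoc, W_mulX (pad m p.2) (j:ℕ) j.isLt (fun t ht => pad_big _ t ht),
    ← mul_assoc, ← chi_comm, ← chi_mul, pad_add_delta]

lemma psi_one : psi m ν (1, 0) = 1 := by
  unfold psi
  rw [chi_one, one_mul, show pad m (0 : Fin m → ZMod 2) = fun _ => 0 from funext (pad_zero),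
    W_zero_fn]

lemma psi_covers (z : FreeGroup (Option (Fin m))) :
    ∀ p, ∃ q, psi m ν q = psi m ν p * PresentedGroup.mk (Erel m ν) z := by
  induction z using FreeGroup.induction_on with
  | C1 => exact fun p => ⟨p, by rw [map_one, mul_one]⟩
  | of x =>
      intro p
      cases x with
      | none =>
          refine ⟨(p.1 * (-1), p.2), ?_⟩
          have : PresentedGroup.mk (Erel m ν) (FreeGroup.of none) = chi m ν (-1) := by
            rw [chi_neg]; rfl
          rw [this, psi_mul_chi]
      | some j => exact ⟨_, (psi_mul_xgen p j).symm⟩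
  | inv_of x _ =>
      intro p
      cases x with
      | none =>
          refine ⟨(p.1 * (-1), p.2), ?_⟩
          have : (PresentedGroup.mk (Erel m ν) (FreeGroup.of none))⁻¹ = chi m ν (-1) := by
            rw [chi_neg]; exact neg1_inv
          rw [map_inv, this, psi_mul_chi]
      | some j =>
          refine ⟨((-1) ^ (pad m p.2 ((j:ℕ)+1)).val * ν ^ (pad m p.2 (j:ℕ)).val * (p.1 * ν),
            p.2 + delta j), ?_⟩
          have h1 : (PresentedGroup.mk (Erel m ν) (FreeGroup.of (some j)))⁻¹
              = chi m ν ν * xgen m ν j := xgen_inv j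
          rw [map_inv, h1, ← mul_assoc (psi m ν p) (chi m ν ν) (xgen m ν j), psi_mul_chi, psi_mul_xgen]
  | mul x y ihx ihy =>
      intro p
      obtain ⟨q1, hq1⟩ := ihx p
      obtain ⟨q2, hq2⟩ := ihy q1
      exact ⟨q2, by rw [map_mul, ← mul_assoc, ← hq1, hq2]⟩

lemma psi_surjective : Function.Surjective (psi m ν) := by
  intro g
  induction g using PresentedGroup.induction_on with
  | _ z =>
      obtain ⟨q, hq⟩ := psi_covers z (1, 0)
      exact ⟨q, by rw [hq, psi_one, one_mul]⟩
end

section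
variable {m : ℕ} {ν : ℤˣ}

lemma delta_def (j : Fin m) : delta j = fun x => if x = j then (1 : ZMod 2) else 0 := rfl

lemma Bf_single_right (a : Fin m → ZMod 2) (j : Fin m) (v : ZMod 2) :
    Bf m a (fun x => if x = j then v else 0) = pad m a ((j:ℕ)+1) * v := by
  unfold Bf
  rw [Finset.sum_eq_single (j:ℕ)]
  · rw [pad_single, if_pos rfl]
  · intro i _ hne; rw [pad_single, if_neg hne, mul_zero]
  · intro h; exact absurd (Finset.mem_range.mpr j.isLt) h

lemma Bf_single_left (b : Fin m → ZMod 2) (j : Fin m) (v : ZMod 2) :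
    Bf m (fun x => if x = j then v else 0) b
      = if (j:ℕ) = 0 then 0 else v * pad m b ((j:ℕ) - 1) := by
  unfold Bf
  rcases Nat.eq_zero_or_pos (j:ℕ) with h0 | h0
  · rw [if_pos h0]
    refine Finset.sum_eq_zero fun i _ => ?_
    rw [pad_single, if_neg (by omega), zero_mul]
  · rw [if_neg (by omega)]
    rw [Finset.sum_eq_single ((j:ℕ) - 1)]
    · rw [pad_single, if_pos (by omega)]
    · intro i _ hne; rw [pad_single, if_neg (by omega), zero_mul]
    · intro h; exact absurd (Finset.mem_range.mpr (by have := j.isLt; omega)) h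

lemma Qf_single_right (a : Fin m → ZMod 2) (j : Fin m) (v : ZMod 2) :
    Qf m a (fun x => if x = j then v else 0) = pad m a (j:ℕ) * v := by
  unfold Qf
  rw [Finset.sum_eq_single (j:ℕ)]
  · rw [pad_single, if_pos rfl]
  · intro i _ hne; rw [pad_single, if_neg hne, mul_zero]
  · intro h; exact absurd (Finset.mem_range.mpr j.isLt) h

lemma cf_dd (i j : Fin m) :
    cf m ν (delta i) (delta j)
      = (if (j:ℕ) + 1 = (i:ℕ) then (-1) else 1) * (if i = j then ν else 1) := by
  unfold cf
  rw [delta_def i, delta_def j, Bf_single_right, Qf_single_right, pad_single, pad_single,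
    mul_one, mul_one]
  have hiff : ((j:ℕ) = (i:ℕ)) ↔ i = j := by rw [Fin.ext_iff]; omega
  rw [apply_ite ZMod.val, apply_ite ZMod.val, pow_ite, pow_ite]
  norm_num
  simp only [hiff, show ZMod.val (1:ZMod 2) = 1 from rfl, pow_one, neg_one_mul]

lemma Model.inv_def (p : Model m ν) : p⁻¹ = ⟨p.s * cf m ν p.a p.a, p.a⟩ := rfl

/-- images of the generators in the model -/
def fmap (m : ℕ) (ν : ℤˣ) : Option (Fin m) → Model m ν
  | none => ⟨-1, 0⟩
  | some i => ⟨1, delta i⟩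

lemma cf_dd_self (i : Fin m) : cf m ν (delta i) (delta i) = ν := by
  rw [cf_dd, if_neg (by omega), if_pos rfl, one_mul]

lemma hrel : ∀ r ∈ Erel m ν, FreeGroup.lift (fmap m ν) r = 1 := by
  intro r hr
  simp only [Erel, Set.mem_union, Set.mem_singleton_iff, Set.mem_setOf_eq] at hr
  rcases hr with ((((h | ⟨i, h⟩) | ⟨i, h⟩) | ⟨i, j, hij, h⟩) | ⟨i, j, hij, h⟩) <;> subst h
  · -- (-1)^2 = 1
    rw [map_pow, FreeGroup.lift_apply_of, sq, Model.mul_def]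
    refine Model.ext ?_ ?_
    · show (-1 : ℤˣ) * (-1) * cf m ν 0 0 = 1
      rw [cf_zero_left]; decide
    · show (0 : Fin m → ZMod 2) + 0 = 0; simp
  · -- -1 central
    simp only [map_mul, map_inv, FreeGroup.lift_apply_of]
    rw [← commutatorElement_def]
    rw [commutatorElement_eq_one_iff_mul_comm]
    rw [Model.mul_def, Model.mul_def]
    refine Model.ext ?_ ?_
    · show (-1 : ℤˣ) * 1 * cf m ν 0 (delta i) = 1 * (-1) * cf m ν (delta i) 0
      rw [cf_zero_left, cf_zero_right]; decide
    · show (0 : Fin m → ZMod 2) + delta i = delta i + 0; rw [add_comm]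
  · -- squares
    simp only [map_mul, map_inv, map_pow, FreeGroup.lift_apply_of, apply_ite (FreeGroup.lift (fmap m ν)),
      map_one]
    have hsq : (⟨1, delta i⟩ : Model m ν) ^ 2 = ⟨ν, 0⟩ := by
      rw [sq, Model.mul_def]
      refine Model.ext ?_ ?_
      · show 1 * 1 * cf m ν (delta i) (delta i) = ν
        rw [cf_dd_self, one_mul, one_mul]
      · show delta i + delta i = 0
        funext x; exact CharTwo.add_self_eq_zero _
    show (fmap m ν (some i)) ^ 2 * (if ν = 1 then 1 else fmap m ν none)⁻¹ = 1
    rcases Int.units_eq_one_or ν with hv | hv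
    · rw [if_pos hv, inv_one, mul_one]
      show (⟨1, delta i⟩ : Model m ν) ^ 2 = 1
      rw [hsq, hv]; rfl
    · rw [if_neg (by rw [hv]; decide)]
      show (⟨1, delta i⟩ : Model m ν) ^ 2 * (⟨-1, 0⟩ : Model m ν)⁻¹ = 1
      rw [hsq, Model.inv_def, Model.mul_def]
      refine Model.ext ?_ ?_
      · show ν * ((-1) * cf m ν 0 0) * cf m ν 0 0 = 1
        rw [cf_zero_left, hv]; decide
      · show (0 : Fin m → ZMod 2) + 0 = 0; simp
  · -- far commutation
    simp only [map_mul, map_inv, FreeGroup.lift_apply_of]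
    rw [← commutatorElement_def, commutatorElement_eq_one_iff_mul_comm]
    show (⟨1, delta i⟩ : Model m ν) * ⟨1, delta j⟩ = ⟨1, delta j⟩ * ⟨1, delta i⟩
    rw [Model.mul_def, Model.mul_def]
    refine Model.ext ?_ ?_
    · show 1 * 1 * cf m ν (delta i) (delta j) = 1 * 1 * cf m ν (delta j) (delta i)
      rw [cf_dd, cf_dd, if_neg (show ¬((j:ℕ)+1 = (i:ℕ)) by omega),
        if_neg (show ¬ i = j by rw [Fin.ext_iff]; omega),
        if_neg (show ¬((i:ℕ)+1 = (j:ℕ)) by omega),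
        if_neg (show ¬ j = i by rw [Fin.ext_iff]; omega)]
    · show delta i + delta j = delta j + delta i; rw [add_comm]
  · -- adjacent anticommutation
    simp only [map_mul, map_inv, FreeGroup.lift_apply_of]
    rw [mul_inv_eq_one]
    show (⟨1, delta j⟩ : Model m ν) * ⟨1, delta i⟩ = ⟨-1, 0⟩ * ⟨1, delta i⟩ * ⟨1, delta j⟩
    rw [Model.mul_def, Model.mul_def, Model.mul_def]
    refine Model.ext ?_ ?_
    · show 1 * 1 * cf m ν (delta j) (delta i)
        = (-1) * 1 * cf m ν 0 (delta i) * 1 * cf m ν (0 + delta i) (delta j)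
      rw [cf_zero_left, zero_add, cf_dd, cf_dd, if_pos (show (i:ℕ)+1 = (j:ℕ) by omega),
        if_neg (show ¬ j = i by rw [Fin.ext_iff]; omega),
        if_neg (show ¬((j:ℕ)+1 = (i:ℕ)) by omega),
        if_neg (show ¬ i = j by rw [Fin.ext_iff]; omega)]
      decide
    · show delta j + delta i = 0 + delta i + delta j
      rw [zero_add, add_comm]

/-- the canonical hom to the model -/
noncomputable def phi (m : ℕ) (ν : ℤˣ) : Egrp m ν →* Model m ν := PresentedGroup.toGroup hrel

lemma phi_neg1 : phi m ν (neg1 m ν) = ⟨-1, 0⟩ := PresentedGroup.toGroup.of hrel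

lemma phi_xgen (i : Fin m) : phi m ν (xgen m ν i) = ⟨1, delta i⟩ := PresentedGroup.toGroup.of hrel

lemma phi_chi (s : ℤˣ) : phi m ν (chi m ν s) = ⟨s, 0⟩ := by
  rcases Int.units_eq_one_or s with hs | hs <;> subst hs
  · rw [chi_one, map_one]; rfl
  · rw [chi_neg, phi_neg1]

lemma phi_X' (t : ℕ) (h : t < m) : phi m ν (X' m ν t) = ⟨1, delta ⟨t, h⟩⟩ := by
  rw [X', dif_pos h, phi_xgen]

lemma phi_W (a : Fin m → ZMod 2) (n : ℕ) : ∀ s, s + n ≤ m →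
    phi m ν (W m ν (pad m a) s n)
      = ⟨1, fun x => if s ≤ (x:ℕ) ∧ (x:ℕ) < s + n then a x else 0⟩ := by
  induction n with
  | zero =>
      intro s _
      rw [W_zero, map_one]
      have hz : (fun x : Fin m => if s ≤ (x:ℕ) ∧ (x:ℕ) < s + 0 then a x else 0)
          = (0 : Fin m → ZMod 2) := funext fun x => if_neg (by omega)
      rw [hz]
      rfl
  | succ n ih =>
      intro s hs
      have hsm : s < m := by omega
      rw [W_succ, map_mul, map_pow, phi_X' s hsm, ih (s+1) (by omega)]
      have hps : pad m a s = a ⟨s, hsm⟩ := dif_pos hsm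
      rcases zmod2_cases (pad m a s) with h0 | h0
      · rw [h0, show ((0:ZMod 2)).val = 0 from rfl, pow_zero, one_mul]
        refine Model.ext rfl ?_
        funext x
        show (if s+1 ≤ (x:ℕ) ∧ (x:ℕ) < s+1+n then a x else 0)
          = (if s ≤ (x:ℕ) ∧ (x:ℕ) < s+(n+1) then a x else 0)
        by_cases hx : (x:ℕ) = s
        · have hxx : x = ⟨s, hsm⟩ := by rw [Fin.ext_iff]; exact hx
          rw [if_neg (show ¬(s+1 ≤ (x:ℕ) ∧ (x:ℕ) < s+1+n) by omega),
            if_pos (show s ≤ (x:ℕ) ∧ (x:ℕ) < s+(n+1) by omega), hxx, ← hps, h0]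
        · exact if_congr (by omega) rfl rfl
      · rw [h0, show ((1:ZMod 2)).val = 1 from rfl, pow_one, Model.mul_def]
        set mask : Fin m → ZMod 2 :=
          fun x => if s+1 ≤ (x:ℕ) ∧ (x:ℕ) < s+1+n then a x else 0 with hmaskdef
        have hmask : ∀ t : ℕ, t ≤ s → pad m mask t = 0 := by
          intro t ht
          unfold pad
          split
          · exact if_neg (by simp only [Fin.val_mk]; omega)
          · rfl
        have hB : Bf m (delta ⟨s, hsm⟩) mask = 0 := by
          rw [delta_def, Bf_single_left]
          split
          · rfl
          · rw [hmask (s-1) (by omega), mul_zero]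
        have hQ : Qf m (delta ⟨s, hsm⟩) mask = 0 := by
          rw [Qf_comm, delta_def, Qf_single_right, hmask s (le_refl s), zero_mul]
        have hcf : cf m ν (delta ⟨s, hsm⟩) mask = 1 := by
          unfold cf
          rw [hB, hQ]
          simp
        refine Model.ext ?_ ?_
        · show 1 * 1 * cf m ν (delta ⟨s, hsm⟩) mask = 1
          rw [hcf, one_mul, one_mul]
        · show delta ⟨s, hsm⟩ + mask = _
          funext x
          show delta ⟨s, hsm⟩ x + mask x = _
          by_cases hx : (x:ℕ) = s
          · have hxx : x = ⟨s, hsm⟩ := by rw [Fin.ext_iff]; exact hx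
            rw [hmaskdef]
            simp only [hxx, delta_def, if_pos rfl, if_neg (by omega : ¬ (s+1 ≤ s ∧ s < s+1+n)),
              if_pos (by omega : s ≤ s ∧ s < s + (n+1)), add_zero]
            rw [← hps, h0]
            simp
          · have hxx : x ≠ ⟨s, hsm⟩ := fun hc => hx (by rw [hc])
            rw [hmaskdef]
            simp only [delta_def, if_neg hxx, zero_add]
            show (if s+1 ≤ (x:ℕ) ∧ (x:ℕ) < s+1+n then a x else 0)
              = (if s ≤ (x:ℕ) ∧ (x:ℕ) < s+(n+1) then a x else 0)
            exact if_congr (by omega) rfl rfl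

lemma phi_psi (p : ℤˣ × (Fin m → ZMod 2)) : phi m ν (psi m ν p) = ⟨p.1, p.2⟩ := by
  unfold psi
  rw [map_mul, phi_chi, phi_W p.2 m 0 (by omega), Model.mul_def]
  refine Model.ext ?_ ?_
  · show p.1 * 1 * cf m ν 0 _ = p.1
    rw [cf_zero_left, mul_one, mul_one]
  · show 0 + _ = p.2
    funext x
    show 0 + (if 0 ≤ (x:ℕ) ∧ (x:ℕ) < 0 + m then p.2 x else 0) = p.2 x
    rw [zero_add, if_pos ⟨by omega, by have := x.isLt; omega⟩]

lemma phi_bijective : Function.Bijective (phi m ν) := by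
  constructor
  · intro g h hgh
    obtain ⟨p, hp⟩ := psi_surjective g
    obtain ⟨q, hq⟩ := psi_surjective h
    rw [← hp, ← hq, phi_psi, phi_psi] at hgh
    have h1 := congrArg Model.s hgh
    have h2 := congrArg Model.a hgh
    rw [← hp, ← hq]
    exact congrArg (psi m ν) (Prod.ext h1 h2)
  · intro z
    exact ⟨psi m ν (z.s, z.a), by rw [phi_psi]⟩

/-- the isomorphism between the presented group and the model. -/
noncomputable def isoE : Egrp m ν ≃* Model m ν := MulEquiv.ofBijective (phi m ν) phi_bijective
end

/-! ### Transfer of centers along a `MulEquiv` -/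

def centerCongr {G H : Type*} [Group G] [Group H] (e : G ≃* H) :
    Subgroup.center G ≃* Subgroup.center H where
  toFun z := ⟨e z, by
    rw [Subgroup.mem_center_iff]
    intro g
    have hz := Subgroup.mem_center_iff.mp z.2 (e.symm g)
    calc g * e z.1 = e (e.symm g * z.1) := by rw [map_mul, e.apply_symm_apply]
      _ = e (z.1 * e.symm g) := by rw [hz]
      _ = e z.1 * g := by rw [map_mul, e.apply_symm_apply]⟩
  invFun z := ⟨e.symm z, by
    rw [Subgroup.mem_center_iff]
    intro g
    have hz := Subgroup.mem_center_iff.mp z.2 (e g)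
    calc g * e.symm z.1 = e.symm (e g * z.1) := by rw [map_mul, e.symm_apply_apply]
      _ = e.symm (z.1 * e g) := by rw [hz]
      _ = e.symm z.1 * g := by rw [map_mul, e.symm_apply_apply]⟩
  left_inv z := Subtype.ext (e.symm_apply_apply z.1)
  right_inv z := Subtype.ext (e.apply_symm_apply z.1)
  map_mul' z w := Subtype.ext (map_mul e z.1 w.1)

section Center
variable {m : ℕ} {ν : ℤˣ}

/-- the alternating vector `(1,0,1,0,…)` -/
def ev (m : ℕ) : Fin m → ZMod 2 := fun x => if (x:ℕ) % 2 = 0 then 1 else 0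

lemma pad_ev (n : ℕ) : pad m (ev m) n = if n < m ∧ n % 2 = 0 then 1 else 0 := by
  unfold pad ev
  split
  · next h =>
      show (if (n % 2 = 0) then (1:ZMod 2) else 0) = _
      exact if_congr (by omega) rfl rfl
  · next h => rw [if_neg (by omega)]

lemma neg1pow_inj : ∀ x y : ZMod 2, ((-1:ℤˣ))^x.val = (-1)^y.val → x = y := by decide

lemma center_run (p : Model m ν) (hp : p ∈ Subgroup.center (Model m ν)) (j : Fin m) :
    (if (j:ℕ) = 0 then 0 else pad m p.a ((j:ℕ)-1)) = pad m p.a ((j:ℕ)+1) := by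
  have h := Subgroup.mem_center_iff.mp hp ⟨1, delta j⟩
  rw [Model.mul_def, Model.mul_def] at h
  have hs := congrArg Model.s h
  simp only [one_mul, mul_one] at hs
  have hs2 : cf m ν (delta j) p.a = cf m ν p.a (delta j) := mul_left_cancel hs
  unfold cf at hs2
  rw [Qf_comm (delta j) p.a] at hs2
  have hB : Bf m (delta j) p.a = Bf m p.a (delta j) := neg1pow_inj _ _ (mul_right_cancel hs2)
  rw [delta_def, Bf_single_left, Bf_single_right, mul_one] at hB
  rw [← hB]
  split
  · rfl
  · rw [one_mul]

lemma center_char (hm : m % 2 = 1) (p : Model m ν) (hp : p ∈ Subgroup.center (Model m ν)) :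
    ∀ n : ℕ, pad m p.a n = if n % 2 = 0 ∧ n < m then pad m p.a 0 else 0 := by
  intro n
  induction n using Nat.strong_induction_on with
  | _ n ih =>
      match n with
      | 0 => rw [if_pos ⟨rfl, by omega⟩]
      | 1 =>
          have h := center_run p hp ⟨0, by omega⟩
          rw [Fin.val_mk, if_pos rfl] at h
          rw [if_neg (by omega)]
          exact h.symm
      | (t+2) =>
          by_cases htm : t + 2 < m
          · have h := center_run p hp ⟨t+1, by omega⟩
            simp only [Fin.val_mk, if_neg (by omega : ¬ (t+1 = 0))] at h
            have ht : t + 1 - 1 = t := by omega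
            rw [ht] at h
            rw [← h, ih t (by omega)]
            exact if_congr (by omega) rfl rfl
          · rw [pad_big _ _ (by omega), if_neg (by omega)]

lemma Bf_ev_symm (hm : m % 2 = 1) (t : ZMod 2) (b : Fin m → ZMod 2) :
    Bf m (fun x => t * ev m x) b = Bf m b (fun x => t * ev m x) := by
  set u : ℕ → ZMod 2 := fun n => if n % 2 = 1 then pad m b n else 0 with hu
  have hL : Bf m (fun x => t * ev m x) b = t * ∑ i ∈ Finset.range m, u i := by
    unfold Bf
    rw [Finset.mul_sum]
    refine Finset.sum_congr rfl fun i hi => ?_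
    have him : i < m := Finset.mem_range.mp hi
    rw [pad_smul, pad_ev, mul_assoc]
    congr 1
    simp only [hu]
    by_cases hpar : i % 2 = 1
    · rw [if_pos (by omega), if_pos hpar, one_mul]
    · rw [if_neg (by omega), if_neg hpar, zero_mul]
  have hR : Bf m b (fun x => t * ev m x) = t * ∑ i ∈ Finset.range m, u (i+1) := by
    unfold Bf
    rw [Finset.mul_sum]
    refine Finset.sum_congr rfl fun i hi => ?_
    have him : i < m := Finset.mem_range.mp hi
    rw [pad_smul, pad_ev]
    simp only [hu]
    by_cases hpar : i % 2 = 0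
    · rw [if_pos ⟨him, hpar⟩, if_pos (by omega), mul_one, mul_comm]
    · rw [if_neg (by omega), if_neg (by omega), mul_zero, mul_zero]
  have hsum : ∑ i ∈ Finset.range m, u (i+1) = ∑ i ∈ Finset.range m, u i := by
    have h1 := Finset.sum_range_succ' u m
    have h2 := Finset.sum_range_succ u m
    have hu0 : u 0 = 0 := by simp only [hu]; norm_num
    have hum : u m = 0 := by
      simp only [hu]
      rw [if_pos hm, pad_big _ _ (le_refl m)]
    rw [h2, hum, add_zero, hu0, add_zero] at h1
    exact h1.symm
  rw [hL, hR, hsum]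

lemma cf_ev_comm (hm : m % 2 = 1) (t : ZMod 2) (b : Fin m → ZMod 2) :
    cf m ν (fun x => t * ev m x) b = cf m ν b (fun x => t * ev m x) := by
  unfold cf
  rw [Bf_ev_symm hm, Qf_comm]

lemma center_mem (hm : m % 2 = 1) (s : ℤˣ) (t : ZMod 2) :
    (⟨s, fun x => t * ev m x⟩ : Model m ν) ∈ Subgroup.center (Model m ν) := by
  rw [Subgroup.mem_center_iff]
  intro q
  rw [Model.mul_def, Model.mul_def]
  refine Model.ext ?_ ?_
  · show q.s * s * cf m ν q.a _ = s * q.s * cf m ν _ q.a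
    rw [cf_ev_comm hm, mul_comm q.s s]
  · show q.a + _ = _ + q.a
    rw [add_comm]

lemma ev_zero (h0 : 0 < m) : ev m ⟨0, h0⟩ = 1 := by
  unfold ev; norm_num

lemma center_iff (hm : m % 2 = 1) (p : Model m ν) :
    p ∈ Subgroup.center (Model m ν) ↔ ∃ t, p.a = fun x => t * ev m x := by
  constructor
  · intro hp
    refine ⟨pad m p.a 0, funext fun x => ?_⟩
    have hx : p.a x = pad m p.a (x:ℕ) := by
      unfold pad; rw [dif_pos x.isLt]
    rw [hx, center_char hm p hp (x:ℕ)]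
    unfold ev
    by_cases hpar : (x:ℕ) % 2 = 0
    · rw [if_pos ⟨hpar, x.isLt⟩, if_pos hpar, mul_one]
    · rw [if_neg (by omega), if_neg hpar, mul_zero]
  · rintro ⟨t, ht⟩
    have : p = ⟨p.s, fun x => t * ev m x⟩ := by
      refine Model.ext rfl ?_
      exact ht
    rw [this]
    exact center_mem hm p.s t

lemma Bf_smul_smul (t t' : ZMod 2) (a b : Fin m → ZMod 2) :
    Bf m (fun x => t * a x) (fun x => t' * b x) = t * t' * Bf m a b := by
  unfold Bf
  rw [Finset.mul_sum]
  refine Finset.sum_congr rfl fun i _ => ?_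
  rw [pad_smul, pad_smul, mul_mul_mul_comm, mul_mul_mul_comm t t']

lemma Qf_smul_smul (t t' : ZMod 2) (a b : Fin m → ZMod 2) :
    Qf m (fun x => t * a x) (fun x => t' * b x) = t * t' * Qf m a b := by
  unfold Qf
  rw [Finset.mul_sum]
  refine Finset.sum_congr rfl fun i _ => ?_
  rw [pad_smul, pad_smul, mul_mul_mul_comm, mul_mul_mul_comm t t']

lemma Bf_ev_ev : Bf m (ev m) (ev m) = 0 := by
  unfold Bf
  refine Finset.sum_eq_zero fun i _ => ?_
  rw [pad_ev, pad_ev]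
  by_cases h1 : (i+1) < m ∧ (i+1) % 2 = 0
  · rw [if_pos h1, if_neg (by omega), one_mul]
  · rw [if_neg h1, zero_mul]

lemma count_ev : ∀ M : ℕ,
    (∑ i ∈ Finset.range M, if i % 2 = 0 then (1:ZMod 2) else 0) = (((M+1)/2 : ℕ) : ZMod 2) := by
  intro M
  induction M with
  | zero => simp
  | succ M ih =>
      rw [Finset.sum_range_succ, ih]
      by_cases hpar : M % 2 = 0
      · rw [if_pos hpar, show (M+1+1)/2 = (M+1)/2 + 1 by omega, Nat.cast_add, Nat.cast_one]
      · rw [if_neg hpar, add_zero, show (M+1+1)/2 = (M+1)/2 by omega]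

lemma Qf_ev_ev : Qf m (ev m) (ev m) = (((m+1)/2 : ℕ) : ZMod 2) := by
  unfold Qf
  rw [← count_ev m]
  refine Finset.sum_congr rfl fun i hi => ?_
  have him : i < m := Finset.mem_range.mp hi
  rw [pad_ev]
  by_cases hpar : i % 2 = 0
  · rw [if_pos ⟨him, hpar⟩, if_pos hpar, mul_one]
  · rw [if_neg (by omega), if_neg hpar, mul_zero]

end Center

section Final
variable {m : ℕ} {ν : ℤˣ}

def logs (u : ℤˣ) : ZMod 2 := if (u:ℤ) = 1 then 0 else 1
def sgn (t : ZMod 2) : ℤˣ := (-1)^t.val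

lemma sgn_logs (u : ℤˣ) : sgn (logs u) = u := by
  rcases Int.units_eq_one_or u with h | h <;> subst h <;> decide

lemma logs_sgn (t : ZMod 2) : logs (sgn t) = t := by revert t; decide

lemma logs_mul (u v : ℤˣ) : logs (u * v) = logs u + logs v := by
  rcases Int.units_eq_one_or u with h | h <;> rcases Int.units_eq_one_or v with h' | h' <;>
    subst h <;> subst h' <;> decide

lemma logs_mul_pow (u v : ℤˣ) (e : ZMod 2) :
    logs (u * v * (-1)^e.val) = logs u + logs v + e := by
  rcases Int.units_eq_one_or u with h | h <;> rcases Int.units_eq_one_or v with h' | h' <;>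
    subst h <;> subst h' <;> revert e <;> decide

lemma cf_case1 (hcase : ν = 1 ∨ (((m+1)/2 : ℕ) : ZMod 2) = 0) (t t' : ZMod 2) :
    cf m ν (fun x => t * ev m x) (fun x => t' * ev m x) = 1 := by
  unfold cf
  rw [Bf_smul_smul, Bf_ev_ev, Qf_smul_smul, Qf_ev_ev, mul_zero,
    show ((0:ZMod 2)).val = 0 from rfl, pow_zero, one_mul]
  rcases hcase with h | h
  · rw [h, one_pow]
  · rw [h, mul_zero, show ((0:ZMod 2)).val = 0 from rfl, pow_zero]

lemma cf_case2 (hν : ν = -1) (hk : (((m+1)/2 : ℕ) : ZMod 2) = 1) (t t' : ZMod 2) :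
    cf m ν (fun x => t * ev m x) (fun x => t' * ev m x) = (-1)^(t*t').val := by
  unfold cf
  rw [Bf_smul_smul, Bf_ev_ev, Qf_smul_smul, Qf_ev_ev, mul_zero, hk, mul_one, hν,
    show ((0:ZMod 2)).val = 0 from rfl, pow_zero, one_mul]

/-- Center ≃ ℤ/2 × ℤ/2 in case `ν = 1` or `k` even. -/
noncomputable def E1 (hm : m % 2 = 1) (hcase : ν = 1 ∨ (((m+1)/2 : ℕ) : ZMod 2) = 0) :
    Subgroup.center (Model m ν) ≃* Multiplicative (ZMod 2 × ZMod 2) where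
  toFun z := Multiplicative.ofAdd (logs z.1.s, z.1.a ⟨0, by omega⟩)
  invFun g := ⟨⟨sgn g.toAdd.1, fun x => g.toAdd.2 * ev m x⟩, center_mem hm _ _⟩
  left_inv z := by
    have h0 : (0:ℕ) < m := by omega
    obtain ⟨t, ht⟩ := (center_iff hm z.1).mp z.2
    have h00 : z.1.a ⟨0, h0⟩ = t := by
      rw [ht]; show t * ev m ⟨0, h0⟩ = t; rw [ev_zero h0, mul_one]
    refine Subtype.ext (Model.ext ?_ ?_)
    · show sgn (logs z.1.s) = z.1.s
      exact sgn_logs _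
    · show (fun x => z.1.a ⟨0, h0⟩ * ev m x) = z.1.a
      rw [h00, ht]
  right_inv g := by
    have h0 : (0:ℕ) < m := by omega
    show Multiplicative.ofAdd (logs (sgn g.toAdd.1), g.toAdd.2 * ev m ⟨0, h0⟩) = g
    rw [logs_sgn, ev_zero h0, mul_one]
    rfl
  map_mul' z w := by
    have h0 : (0:ℕ) < m := by omega
    obtain ⟨t, ht⟩ := (center_iff hm z.1).mp z.2
    obtain ⟨t', ht'⟩ := (center_iff hm w.1).mp w.2
    show Multiplicative.ofAdd _ = Multiplicative.ofAdd _ * Multiplicative.ofAdd _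
    rw [← ofAdd_add]
    refine congrArg Multiplicative.ofAdd (Prod.ext ?_ ?_)
    · show logs ((z.1 * w.1).s) = logs z.1.s + logs w.1.s
      have h1 : (z.1 * w.1).s = z.1.s * w.1.s * cf m ν z.1.a w.1.a := rfl
      rw [h1, ht, ht', cf_case1 hcase, mul_one, logs_mul]
    · show (z.1 * w.1).a ⟨0, h0⟩ = z.1.a ⟨0, h0⟩ + w.1.a ⟨0, h0⟩
      rfl

lemma dec1 : ∀ t l : ZMod 2, ((((t.val : ZMod 4) + 2*(l.val : ZMod 4)).val : ℕ) : ZMod 2) = t := by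
  decide

lemma dec2 : ∀ t l : ZMod 2,
    ((((t.val : ZMod 4) + 2*(l.val : ZMod 4)).val / 2 : ℕ) : ZMod 2) = l := by decide

lemma dec3 : ∀ n : ZMod 4,
    (((n.val : ZMod 2)).val : ZMod 4) + 2*((((n.val/2 : ℕ) : ZMod 2)).val : ZMod 4) = n := by
  decide

lemma dec4 : ∀ t t' l l' : ZMod 2,
    (((t+t').val : ZMod 4) + 2*((l + l' + t*t').val : ZMod 4))
      = ((t.val : ZMod 4) + 2*(l.val : ZMod 4)) + ((t'.val : ZMod 4) + 2*(l'.val : ZMod 4)) := by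
  decide

/-- Center ≃ ℤ/4 in case `ν = -1` and `k` odd. -/
noncomputable def E2 (hm : m % 2 = 1) (hν : ν = -1) (hk : (((m+1)/2 : ℕ) : ZMod 2) = 1) :
    Subgroup.center (Model m ν) ≃* Multiplicative (ZMod 4) where
  toFun z := Multiplicative.ofAdd
    (((z.1.a ⟨0, by omega⟩).val : ZMod 4) + 2 * ((logs z.1.s).val : ZMod 4))
  invFun g := ⟨⟨sgn ((g.toAdd.val / 2 : ℕ) : ZMod 2),
      fun x => ((g.toAdd.val : ℕ) : ZMod 2) * ev m x⟩, center_mem hm _ _⟩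
  left_inv z := by
    have h0 : (0:ℕ) < m := by omega
    obtain ⟨t, ht⟩ := (center_iff hm z.1).mp z.2
    have h00 : z.1.a ⟨0, h0⟩ = t := by
      rw [ht]; show t * ev m ⟨0, h0⟩ = t; rw [ev_zero h0, mul_one]
    refine Subtype.ext (Model.ext ?_ ?_)
    · show sgn (((Multiplicative.ofAdd (((z.1.a ⟨0, h0⟩).val : ZMod 4)
          + 2 * ((logs z.1.s).val : ZMod 4))).toAdd.val / 2 : ℕ) : ZMod 2) = z.1.s
      rw [toAdd_ofAdd, dec2, sgn_logs]
    · show (fun x => ((((Multiplicative.ofAdd (((z.1.a ⟨0, h0⟩).val : ZMod 4)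
          + 2 * ((logs z.1.s).val : ZMod 4))).toAdd.val : ℕ) : ZMod 2)) * ev m x) = z.1.a
      rw [toAdd_ofAdd, dec1, h00, ht]
  right_inv g := by
    have h0 : (0:ℕ) < m := by omega
    show Multiplicative.ofAdd
        ((((((g.toAdd.val : ℕ) : ZMod 2)) * ev m ⟨0, h0⟩).val : ZMod 4)
          + 2 * ((logs (sgn ((g.toAdd.val / 2 : ℕ) : ZMod 2))).val : ZMod 4)) = g
    rw [ev_zero h0, mul_one, logs_sgn, dec3]
    rfl
  map_mul' z w := by
    have h0 : (0:ℕ) < m := by omega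
    obtain ⟨t, ht⟩ := (center_iff hm z.1).mp z.2
    obtain ⟨t', ht'⟩ := (center_iff hm w.1).mp w.2
    have h00 : z.1.a ⟨0, h0⟩ = t := by
      rw [ht]; show t * ev m ⟨0, h0⟩ = t; rw [ev_zero h0, mul_one]
    have h00' : w.1.a ⟨0, h0⟩ = t' := by
      rw [ht']; show t' * ev m ⟨0, h0⟩ = t'; rw [ev_zero h0, mul_one]
    have hA : ((z * w).1).a ⟨0, h0⟩ = t + t' := by
      show z.1.a ⟨0, h0⟩ + w.1.a ⟨0, h0⟩ = t + t'
      rw [h00, h00']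
    have hS : logs (((z * w).1).s) = logs z.1.s + logs w.1.s + t * t' := by
      have h1 : ((z * w).1).s = z.1.s * w.1.s * cf m ν z.1.a w.1.a := rfl
      rw [h1, ht, ht', cf_case2 hν hk, logs_mul_pow]
    show Multiplicative.ofAdd _ = Multiplicative.ofAdd _ * Multiplicative.ofAdd _
    rw [← ofAdd_add]
    refine congrArg Multiplicative.ofAdd ?_
    rw [hA, hS, h00, h00']
    exact dec4 t t' (logs z.1.s) (logs w.1.s)

end Final

end
end S15

/-- for `m = 2k−1` odd, `Z(E_{2k−1}^ν) ≅ ℤ/2 × ℤ/2` if `ν = 1` or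
`k` is even, and `Z(E_{2k−1}^ν) ≅ ℤ/4` if `ν = −1` and `k` is odd. -/
theorem stmt15 (k : ℕ) (hk : 1 ≤ k) (ν : ℤˣ) :
    ((ν = 1 ∨ Even k) →
      Nonempty (Subgroup.center (Egrp (2 * k - 1) ν) ≃*
        Multiplicative (ZMod 2 × ZMod 2))) ∧
    ((ν = -1 ∧ Odd k) →
      Nonempty (Subgroup.center (Egrp (2 * k - 1) ν) ≃* Multiplicative (ZMod 4))) := by
  have hm : (2 * k - 1) % 2 = 1 := by omega
  have hkk : ((2 * k - 1) + 1) / 2 = k := by omega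
  constructor
  · intro hcase
    have hcase' : ν = 1 ∨ ((((2 * k - 1 + 1) / 2 : ℕ) : ZMod 2)) = 0 := by
      rcases hcase with h | h
      · exact Or.inl h
      · right
        rw [hkk]
        obtain ⟨c, hc⟩ := h
        exact (ZMod.natCast_eq_zero_iff k 2).mpr ⟨c, by omega⟩
    exact ⟨(S15.centerCongr S15.isoE).trans (S15.E1 hm hcase')⟩
  · rintro ⟨hν, hodd⟩
    have hk1 : ((((2 * k - 1 + 1) / 2 : ℕ) : ZMod 2)) = 1 := by
      rw [hkk]
      rcases S15.zmod2_cases ((k : ZMod 2)) with h | h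
      · have hd := (ZMod.natCast_eq_zero_iff k 2).mp h
        have ho := Nat.odd_iff.mp hodd
        omega
      · exact h
    exact ⟨(S15.centerCongr S15.isoE).trans (S15.E2 hm hν hk1)⟩
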